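/- arXiv:2409.12487 — 2 statements merged into one kernel-verified Lean document; each statement's English description precedes it below -/
import Mathlib

section
/- Let K be a closed convex cone in ℝⁿ, Γ a nonzero vector, and H = {x : Γᵀx = 0} the hyperplane orthogonal to Γ. Suppose for every v ∈ K with Γᵀv > 0 there exists v' ∈ K with Γᵀv' ≤ 0 and v − v' parallel to Γ, and symmetrically for Γᵀv < 0. Then for every v ∈ K, the orthogonal projection of v onto H lies in K. -/
/-- If a closed convex cone `K` allows "subtracting off" a multiple of `Γ` from any
`v ∈ K` on the positive side of `Γ^⊥` (and symmetrically on the negative side), then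
`K` contains the orthogonal projection of each of its elements onto the hyperplane
`H = {x : ⟪Γ, x⟫ = 0}`. -/
theorem projection_onto_reaction_hyperplane_in_cone
    (n : ℕ) (K : Set (EuclideanSpace ℝ (Fin n)))
    (hKclosed : IsClosed K) (hKconv : Convex ℝ K)
    (hKcone : ∀ (c : ℝ), 0 < c → ∀ x ∈ K, c • x ∈ K)
    (Γ : EuclideanSpace ℝ (Fin n)) (hΓ : Γ ≠ 0)
    (hpos : ∀ v ∈ K, (0:ℝ) < inner ℝ Γ v →
      ∃ v' ∈ K, (inner ℝ Γ v' : ℝ) ≤ 0 ∧ ∃ β : ℝ, 0 < β ∧ v - v' = β • Γ)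
    (hneg : ∀ v ∈ K, (inner ℝ Γ v : ℝ) < 0 →
      ∃ v' ∈ K, (0:ℝ) ≤ inner ℝ Γ v' ∧ ∃ β : ℝ, 0 < β ∧ v' - v = β • Γ) :
    ∀ v ∈ K, v - ((inner ℝ Γ v : ℝ) / ‖Γ‖ ^ 2) • Γ ∈ K := by
  intro v hv
  have hΓ2 : (0:ℝ) < ‖Γ‖ ^ 2 := pow_pos (norm_pos_iff.mpr hΓ) 2
  set t : ℝ := (inner ℝ Γ v : ℝ) / ‖Γ‖ ^ 2 with ht
  rcases lt_trichotomy (inner ℝ Γ v : ℝ) 0 with hlt | heq | hgt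
  · obtain ⟨v', hv', hiv', β, hβ, hvv'⟩ := hneg v hv hlt
    have hinner : (inner ℝ Γ v' : ℝ) = inner ℝ Γ v + β * ‖Γ‖ ^ 2 := by
      have := congrArg (fun x => (inner ℝ Γ x : ℝ)) hvv'
      simp only [inner_sub_right, real_inner_smul_right, real_inner_self_eq_norm_sq] at this
      linarith
    have htneg : t < 0 := div_neg_of_neg_of_pos hlt hΓ2
    have htβ : -t ≤ β := by
      have h1 : -(inner ℝ Γ v : ℝ) ≤ β * ‖Γ‖ ^ 2 := by linarith [hinner ▸ hiv']
      rw [ht, ← neg_div, div_le_iff₀ hΓ2]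
      linarith
    set s : ℝ := -t / β with hs
    have hs0 : 0 ≤ s := div_nonneg (by linarith) hβ.le
    have hs1 : s ≤ 1 := by rw [hs, div_le_one hβ]; exact htβ
    have key : v - t • Γ = (1 - s) • v + s • v' := by
      have hβΓ : β • Γ = v' - v := hvv'.symm
      have hsmul : t • Γ = (-s) • (v' - v) := by
        rw [← hβΓ, smul_smul, hs]
        congr 1
        field_simp
      rw [hsmul]
      module
    rw [key]
    exact hKconv hv hv' (by linarith) hs0 (by ring)
  · simp [ht, heq, hv]
  · obtain ⟨v', hv', hiv', β, hβ, hvv'⟩ := hpos v hv hgt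
    have hinner : (inner ℝ Γ v' : ℝ) = inner ℝ Γ v - β * ‖Γ‖ ^ 2 := by
      have := congrArg (fun x => (inner ℝ Γ x : ℝ)) hvv'
      simp only [inner_sub_right, real_inner_smul_right, real_inner_self_eq_norm_sq] at this
      linarith
    have htpos : 0 < t := div_pos hgt hΓ2
    have htβ : t ≤ β := by
      have h1 : (inner ℝ Γ v : ℝ) ≤ β * ‖Γ‖ ^ 2 := by
        have : (inner ℝ Γ v : ℝ) - β * ‖Γ‖ ^ 2 ≤ 0 := hinner ▸ hiv'
        linarith
      rw [ht, div_le_iff₀ hΓ2]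
      linarith
    set s : ℝ := t / β with hs
    have hs0 : 0 ≤ s := div_nonneg htpos.le hβ.le
    have hs1 : s ≤ 1 := by rw [hs, div_le_one hβ]; exact htβ
    have key : v - t • Γ = (1 - s) • v + s • v' := by
      have hsmul : t • Γ = s • (v - v') := by
        rw [hvv', smul_smul, hs]
        congr 1
        field_simp
      rw [hsmul]
      module
    rw [key]
    exact hKconv hv hv' (by linarith) hs0 (by ring)
end

section
/- Let P₁, ..., Pₘ be orthogonal projections onto closed subspaces H₁, ..., Hₘ of ℝⁿ, and let K be a closed set invariant under each Pᵢ (Pᵢ(K) ⊆ K). Then K is invariant under the orthogonal projection onto the intersection ⋂ᵢ Hᵢ: for every v ∈ K, the projection of v onto ⋂ᵢ Hᵢ lies in K. -/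
open RealInnerProductSpace

variable {E : Type*} [NormedAddCommGroup E] [InnerProductSpace ℝ E] [FiniteDimensional ℝ E]

noncomputable def projCLM (U : Submodule ℝ E) : E →L[ℝ] E :=
  U.subtypeL.comp (Submodule.orthogonalProjectionOnto U)

lemma projCLM_apply (U : Submodule ℝ E) (v : E) :
    projCLM U v = (Submodule.orthogonalProjectionOnto U v : E) := rfl

lemma norm_projCLM_le (U : Submodule ℝ E) (v : E) : ‖projCLM U v‖ ≤ ‖v‖ := by
  calc ‖projCLM U v‖ = ‖Submodule.orthogonalProjectionOnto U v‖ := rfl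
    _ ≤ ‖Submodule.orthogonalProjectionOnto U‖ * ‖v‖ := (Submodule.orthogonalProjectionOnto U).le_opNorm v
    _ ≤ 1 * ‖v‖ := by
        have := Submodule.orthogonalProjectionOnto_norm_le U
        have := norm_nonneg v
        nlinarith
    _ = ‖v‖ := one_mul _

lemma projCLM_fix_of_norm_eq (U : Submodule ℝ E) (v : E)
    (h : ‖projCLM U v‖ = ‖v‖) : projCLM U v = v := by
  have hmem := Submodule.sub_starProjection_mem_orthogonal (K := U) v
  have horth : ⟪projCLM U v, v - projCLM U v⟫ = 0 := by
    have := hmem (Submodule.orthogonalProjectionOnto U v) (Submodule.orthogonalProjectionOnto U v).2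
    simpa [projCLM_apply, real_inner_comm] using this
  have hpyth : ‖projCLM U v + (v - projCLM U v)‖ ^ 2
      = ‖projCLM U v‖ ^ 2 + ‖v - projCLM U v‖ ^ 2 := by
    rw [norm_add_sq_real, horth]; ring
  simp only [add_sub_cancel, h] at hpyth
  have : ‖v - projCLM U v‖ = 0 := by
    have := norm_nonneg (v - projCLM U v); nlinarith
  have := norm_eq_zero.mp this
  linear_combination (norm := abel) -this

section Lists

variable {m : ℕ} (H : Fin m → Submodule ℝ E)

noncomputable def Tl (l : List (Fin m)) : E →L[ℝ] E :=
  (l.map fun i => projCLM (H i)).prod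

lemma Tl_nil : Tl H [] = 1 := rfl

lemma Tl_cons (i : Fin m) (l : List (Fin m)) (x : E) :
    Tl H (i :: l) x = projCLM (H i) (Tl H l x) := by
  simp [Tl, List.prod_cons, ContinuousLinearMap.mul_apply]

lemma norm_Tl_le (l : List (Fin m)) (x : E) : ‖Tl H l x‖ ≤ ‖x‖ := by
  induction l with
  | nil => simp [Tl_nil]
  | cons i t ih =>
      rw [Tl_cons]
      exact (norm_projCLM_le _ _).trans ih

lemma Tl_fix_of_norm_eq (l : List (Fin m)) (x : E) (h : ‖Tl H l x‖ = ‖x‖) :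
    Tl H l x = x ∧ ∀ i ∈ l, projCLM (H i) x = x := by
  induction l with
  | nil => simp [Tl_nil]
  | cons i t ih =>
      rw [Tl_cons] at h
      have h1 : ‖Tl H t x‖ = ‖x‖ :=
        le_antisymm (norm_Tl_le H t x)
          (h ▸ norm_projCLM_le (H i) (Tl H t x))
      obtain ⟨hfix, hall⟩ := ih h1
      have h2 : projCLM (H i) x = x := by
        apply projCLM_fix_of_norm_eq
        rw [hfix] at h
        exact h
      refine ⟨by rw [Tl_cons, hfix, h2], ?_⟩
      intro j hj
      rcases List.mem_cons.mp hj with rfl | hj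
      · exact h2
      · exact hall j hj

lemma Tl_fix_of_mem (l : List (Fin m)) (x : E) (hx : ∀ i, x ∈ H i) :
    Tl H l x = x := by
  induction l with
  | nil => simp [Tl_nil]
  | cons i t ih =>
      rw [Tl_cons, ih, projCLM_apply, ← Submodule.starProjection_apply, Submodule.starProjection_eq_self_iff]
      exact hx i

lemma Tl_mem_orthogonal (M : Submodule ℝ E) (hM : ∀ i, M ≤ H i)
    (l : List (Fin m)) (x : E) (hx : x ∈ Mᗮ) : Tl H l x ∈ Mᗮ := by
  induction l with
  | nil => simpa [Tl_nil]
  | cons i t ih =>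
      rw [Tl_cons]
      intro w hw
      have : ⟪(Submodule.orthogonalProjectionOnto (H i) (Tl H t x) : E), w⟫
          = ⟪Tl H t x, (Submodule.orthogonalProjectionOnto (H i) w : E)⟫ := by
        exact Submodule.inner_starProjection_left_eq_right (H i) (Tl H t x) w
      rw [real_inner_comm, projCLM_apply, this,
        ← Submodule.starProjection_apply, Submodule.starProjection_eq_self_iff.mpr (hM i hw)]
      rw [real_inner_comm]
      exact ih w hw

end Lists

lemma contraction_exists {m : ℕ} (H : Fin m → Submodule ℝ E) :
    ∃ c : ℝ, 0 ≤ c ∧ c < 1 ∧ ∀ x ∈ (⨅ i, H i)ᗮ,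
      ‖Tl H (List.finRange m) x‖ ≤ c * ‖x‖ := by
  set M := ⨅ i, H i with hM
  set T := Tl H (List.finRange m) with hT
  set S : Set E := Metric.sphere 0 1 ∩ (Mᗮ : Set E) with hS
  have hScompact : IsCompact S :=
    (isCompact_sphere 0 1).inter_right Mᗮ.closed_of_finiteDimensional
  have key : ∀ x ∈ S, ‖T x‖ < 1 := by
    intro x ⟨hx1, hx2⟩
    have hxnorm : ‖x‖ = 1 := by simpa using hx1
    rcases lt_or_eq_of_le ((norm_Tl_le H _ x).trans_eq hxnorm) with h | h
    · exact h
    · exfalso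
      have hfix := Tl_fix_of_norm_eq H (List.finRange m) x (by rw [h, hxnorm])
      have hmem : x ∈ M := by
        rw [hM, Submodule.mem_iInf]
        intro i
        have := hfix.2 i (List.mem_finRange i)
        rw [projCLM_apply] at this
        exact Submodule.starProjection_eq_self_iff.mp this
      have : x = 0 := by
        have := Submodule.inf_orthogonal_eq_bot M
        have hx0 : x ∈ M ⊓ Mᗮ := ⟨hmem, hx2⟩
        rw [this] at hx0
        simpa using hx0
      rw [this] at hxnorm; simp at hxnorm
  rcases S.eq_empty_or_nonempty with hemp | hne
  · refine ⟨1/2, by norm_num, by norm_num, fun x hx => ?_⟩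
    rcases eq_or_ne x 0 with rfl | hx0
    · simp
    · exfalso
      have : ‖x‖⁻¹ • x ∈ S := by
        constructor
        · simp [norm_smul, norm_ne_zero_iff.mpr hx0, abs_of_pos]
        · exact Mᗮ.smul_mem _ hx
      rw [hemp] at this; exact this
  · obtain ⟨x₀, hx₀S, hmax⟩ := hScompact.exists_isMaxOn hne
      ((continuous_norm.comp T.continuous).continuousOn)
    refine ⟨‖T x₀‖, norm_nonneg _, key x₀ hx₀S, fun x hx => ?_⟩
    rcases eq_or_ne x 0 with rfl | hx0
    · simp
    · have hy : ‖x‖⁻¹ • x ∈ S := by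
        constructor
        · simp [norm_smul, norm_ne_zero_iff.mpr hx0]
        · exact Mᗮ.smul_mem _ hx
      have := hmax hy
      simp only [Function.comp, map_smul, norm_smul, norm_inv, norm_norm] at this
      have hxpos : (0:ℝ) < ‖x‖ := norm_pos_iff.mpr hx0
      calc ‖T x‖ = ‖x‖ * (‖x‖⁻¹ * ‖T x‖) := by field_simp
        _ ≤ ‖x‖ * ‖T x₀‖ := by
            apply mul_le_mul_of_nonneg_left _ hxpos.le
            simpa [map_smul, norm_smul] using this
        _ = ‖T x₀‖ * ‖x‖ := mul_comm _ _

lemma Tl_mem_K {m : ℕ} (H : Fin m → Submodule ℝ E) (K : Set E)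
    (hinv : ∀ i, ∀ v ∈ K, (Submodule.orthogonalProjectionOnto (H i) v : E) ∈ K)
    (l : List (Fin m)) (v : E) (hv : v ∈ K) : Tl H l v ∈ K := by
  induction l with
  | nil => simpa [Tl_nil]
  | cons i t ih => rw [Tl_cons]; exact hinv i _ ih

lemma main_aux {m : ℕ} (H : Fin m → Submodule ℝ E)
    (K : Set E) (hKclosed : IsClosed K)
    (hinv : ∀ i : Fin m, ∀ v ∈ K, ((Submodule.orthogonalProjectionOnto (H i) v : E)) ∈ K) :
    ∀ v ∈ K, ((Submodule.orthogonalProjectionOnto (⨅ i, H i) v : E)) ∈ K := by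
  intro v hv
  set M := ⨅ i, H i with hM
  set T := Tl H (List.finRange m) with hT
  obtain ⟨u, hu⟩ : ∃ u : E, (Submodule.orthogonalProjectionOnto M v : E) = u := ⟨_, rfl⟩
  rw [hu]
  obtain ⟨c, hc0, hc1, hcontr⟩ := contraction_exists H
  have huM : u ∈ M := hu ▸ (Submodule.orthogonalProjectionOnto M v).2
  have hwM : v - u ∈ Mᗮ := hu ▸ (Submodule.sub_starProjection_mem_orthogonal (K := M) v : v - (M.orthogonalProjectionOnto v : E) ∈ Mᗮ)
  have hvuw : v = u + (v - u) := by abel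
  have hTu : T u = u := Tl_fix_of_mem H _ u (fun i => Submodule.mem_iInf _ |>.mp huM i)
  have hTku : ∀ k : ℕ, (T ^ k) u = u := by
    intro k
    induction k with
    | zero => simp
    | succ k ih => rw [pow_succ', ContinuousLinearMap.mul_apply, ih, hTu]
  have hTkw : ∀ k : ℕ, (T ^ k) (v - u) ∈ Mᗮ ∧ ‖(T ^ k) (v - u)‖ ≤ c ^ k * ‖v - u‖ := by
    intro k
    induction k with
    | zero => exact ⟨by simpa using hwM, by simp⟩
    | succ k ih =>
        obtain ⟨ihm, ihn⟩ := ih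
        constructor
        · rw [pow_succ', ContinuousLinearMap.mul_apply]
          exact Tl_mem_orthogonal H M (fun i => iInf_le H i) _ _ ihm
        · rw [pow_succ', ContinuousLinearMap.mul_apply]
          calc ‖T ((T ^ k) (v - u))‖ ≤ c * ‖(T ^ k) (v - u)‖ := hcontr _ ihm
            _ ≤ c * (c ^ k * ‖v - u‖) := mul_le_mul_of_nonneg_left ihn hc0
            _ = c ^ (k + 1) * ‖v - u‖ := by ring
  have hTkv : ∀ k : ℕ, (T ^ k) v = u + (T ^ k) (v - u) := by
    intro k
    conv_lhs => rw [hvuw]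
    rw [map_add, hTku]
  have hmemK : ∀ k : ℕ, (T ^ k) v ∈ K := by
    intro k
    induction k with
    | zero => simpa using hv
    | succ k ih =>
        rw [pow_succ', ContinuousLinearMap.mul_apply]
        exact Tl_mem_K H K hinv _ _ ih
  have htend : Filter.Tendsto (fun k => (T ^ k) v) Filter.atTop (nhds u) := by
    rw [tendsto_iff_norm_sub_tendsto_zero]
    have hb : Filter.Tendsto (fun k : ℕ => c ^ k * ‖v - u‖) Filter.atTop (nhds 0) := by
      simpa using (tendsto_pow_atTop_nhds_zero_of_lt_one hc0 hc1).mul_const ‖v - u‖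
    apply squeeze_zero (fun k => norm_nonneg _) _ hb
    intro k
    rw [hTkv, add_sub_cancel_left]
    exact (hTkw k).2
  exact hKclosed.mem_of_tendsto htend (Filter.Eventually.of_forall hmemK)

/-- If a closed set `K ⊆ ℝⁿ` is invariant under the orthogonal projections onto
subspaces `H₁, ..., Hₘ`, then it is invariant under the orthogonal projection onto
their intersection. -/
theorem closed_set_invariant_projection_inf
    (n m : ℕ) (H : Fin m → Submodule ℝ (EuclideanSpace ℝ (Fin n)))
    (K : Set (EuclideanSpace ℝ (Fin n))) (hKclosed : IsClosed K)
    (hinv : ∀ i : Fin m, ∀ v ∈ K,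
      (((H i).orthogonalProjectionOnto v : EuclideanSpace ℝ (Fin n))) ∈ K) :
    ∀ v ∈ K, (((⨅ i, H i).orthogonalProjectionOnto v : EuclideanSpace ℝ (Fin n))) ∈ K :=
  main_aux H K hKclosed hinv
end
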